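/- Let G be a group and let (G_(m))_{m ∈ ℕ} be an increasing sequence of subgroups of G (G_(m) ⊆ G_(m+1) for all m) whose union is all of G. Then G admits a positive cone if and only if G_(m) admits a positive cone for every m ∈ ℕ. -/

import Mathlib

/-- `P` is a positive cone of the group `G`: it is closed under multiplication and
`G` is the disjoint union of `P`, `P⁻¹` and `{1}`. -/
def IsPositiveCone {G : Type*} [Group G] (P : Set G) : Prop :=
  (∀ a ∈ P, ∀ b ∈ P, a * b ∈ P) ∧
  (∀ g : G, g ∈ P ∨ g⁻¹ ∈ P ∨ g = 1) ∧
  (∀ g ∈ P, g⁻¹ ∉ P) ∧ (1 : G) ∉ P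

theorem stmt2 {G : Type*} [Group G] (Gm : ℕ → Subgroup G)
    (hmono : ∀ m : ℕ, Gm m ≤ Gm (m + 1))
    (hunion : ∀ x : G, ∃ m : ℕ, x ∈ Gm m) :
    (∃ P : Set G, IsPositiveCone P) ↔
      ∀ m : ℕ, ∃ Q : Set (Gm m), IsPositiveCone Q := by
  constructor
  · rintro ⟨P, hmul, htri, hdisj, hone⟩ m
    refine ⟨{g : Gm m | (g : G) ∈ P}, ?_, ?_, ?_, ?_⟩
    · intro a ha b hb; exact hmul a ha b hb
    · intro g
      rcases htri (g : G) with h | h | h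
      · exact Or.inl h
      · exact Or.inr (Or.inl h)
      · exact Or.inr (Or.inr (Subtype.ext h))
    · intro g hg; exact hdisj g hg
    · exact hone
  · intro hQ
    choose Q hQ using hQ
    have hchain : Monotone (fun m => Gm m) := monotone_nat_of_le_succ hmono
    set U : Ultrafilter ℕ := Filter.hyperfilter ℕ with hU
    set S : G → Set ℕ := fun g => {m | ∃ h : g ∈ Gm m, (⟨g, h⟩ : Gm m) ∈ Q m} with hS
    have hcofin : ∀ g : G, {m | g ∈ Gm m} ∈ U := by
      intro g
      obtain ⟨m₀, hm₀⟩ := hunion g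
      have hsub : {m | g ∈ Gm m}ᶜ ⊆ Set.Iio m₀ := by
        intro m hm
        by_contra hlt
        exact hm (hchain (not_lt.mp (by simpa using hlt)) hm₀)
      exact Filter.mem_hyperfilter_of_finite_compl ((Set.finite_Iio m₀).subset hsub)
    refine ⟨{g : G | S g ∈ U}, ?_, ?_, ?_, ?_⟩
    · intro a ha b hb
      have : S a ∩ S b ⊆ S (a * b) := by
        rintro m ⟨⟨hma, hQa⟩, ⟨hmb, hQb⟩⟩
        refine ⟨mul_mem hma hmb, ?_⟩
        have := (hQ m).1 _ hQa _ hQb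
        convert this using 1
        rfl
      exact Filter.mem_of_superset (Filter.inter_mem ha hb) this
    · intro g
      by_cases hg1 : g = 1
      · exact Or.inr (Or.inr hg1)
      have hsub : {m | g ∈ Gm m} ⊆ S g ∪ S g⁻¹ := by
        intro m hm
        rcases (hQ m).2.1 ⟨g, hm⟩ with h | h | h
        · exact Or.inl ⟨hm, h⟩
        · exact Or.inr ⟨inv_mem hm, h⟩
        · exact absurd (congrArg Subtype.val h) hg1
      have hmem : S g ∪ S g⁻¹ ∈ U := Filter.mem_of_superset (hcofin g) hsub
      rcases Ultrafilter.union_mem_iff.mp hmem with h | h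
      · exact Or.inl h
      · exact Or.inr (Or.inl h)
    · intro g hg hginv
      obtain ⟨m, ⟨hm, hQg⟩, ⟨hm', hQg'⟩⟩ :=
        Filter.nonempty_of_mem (Filter.inter_mem hg hginv)
      have heq : (⟨g⁻¹, hm'⟩ : Gm m) = (⟨g, hm⟩ : Gm m)⁻¹ := rfl
      exact (hQ m).2.2.1 _ hQg (heq ▸ hQg')
    · intro h1
      obtain ⟨m, hm, hQ1⟩ := Filter.nonempty_of_mem h1
      have : (⟨(1 : G), hm⟩ : Gm m) = 1 := rfl
      exact (hQ m).2.2.2 (this ▸ hQ1)
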